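/- The family of polynomials {P_{n,m} : m ≥ n ≥ 0} is linearly independent over ℂ in A. -/

import Mathlib

open MvPolynomial

noncomputable section

/-- The polynomial ring `A = ℂ[x₁, x₂, x₃, …]`, with variables indexed by
the positive integers (`X k` is the variable `x_k`). -/
abbrev A : Type := MvPolynomial ℕ+ ℂ

/-- The elementary Schur polynomials `S_k`, defined by the generating identity
`∑_{k≥0} S_k z^k = exp(∑_{n≥1} (x_n/(2n)) z^n)`; equivalently, `S_0 = 1` and
`(k+1) S_{k+1} = ∑_{j=0}^{k} (x_{k+1-j}/2) S_j` (obtained by differentiating in `z`). -/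
noncomputable def S : ℕ → A
  | 0 => 1
  | (k+1) =>
      ((k : ℂ) + 1)⁻¹ • ∑ j ∈ (Finset.range (k+1)).attach,
        (MvPolynomial.C (2⁻¹ : ℂ) * MvPolynomial.X ((k - j.1).succPNat)) * S j.1
  termination_by k => k
  decreasing_by
    have := j.2; simp only [Finset.mem_range] at this; omega

/-- The generalized binomial coefficient `C(1/2, k) = (1/2)(1/2−1)⋯(1/2−k+1)/k!`. -/
noncomputable def halfChoose (k : ℕ) : ℂ :=
  (∏ i ∈ Finset.range k, ((2⁻¹ : ℂ) - (i : ℂ))) / (k.factorial : ℂ)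

/-- `P_{n,m} = ∑_{k=0}^{n} (−1)^k C(1/2,k) S_{m+k} S_{n−k}`. -/
noncomputable def P (n m : ℕ) : A :=
  ∑ k ∈ Finset.range (n+1), ((-1 : ℂ)^k * halfChoose k) • (S (m+k) * S (n-k))

/-- The extremal vectors `φ_n = P_{n,n}`. -/
noncomputable def phi (n : ℕ) : A := P n n

/-- The translation operator `D(p) = x₁·p + ∑_{n≥1} n·x_{n+1}·∂p/∂x_n`
(the sum is finite on each polynomial: only the variables occurring in `p` contribute,
since `∂p/∂x_n = 0` for `n ∉ p.vars`). -/
noncomputable def D (p : A) : A :=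
  MvPolynomial.X 1 * p +
    ∑ n ∈ p.vars, ((n : ℕ) : ℂ) • (MvPolynomial.X (n + 1) * MvPolynomial.pderiv n p)

end

lemma S_zero : S 0 = 1 := by rw [S]

lemma S_succ (k : ℕ) : S (k+1) = ((k : ℂ) + 1)⁻¹ • ∑ j ∈ Finset.range (k+1),
    (MvPolynomial.C (2⁻¹ : ℂ) * MvPolynomial.X ((k - j).succPNat)) * S j := by
  rw [S]; congr 1; exact Finset.sum_attach (Finset.range (k+1)) (fun j => (MvPolynomial.C (2⁻¹ : ℂ) * MvPolynomial.X ((k - j).succPNat)) * S j)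

lemma succPNat_eq_iff {k j : ℕ} (hj : j < k+1) (a : ℕ+) :
    (k - j).succPNat = a ↔ ((a:ℕ) ≤ k+1 ∧ j = k+1-(a:ℕ)) := by
  rw [← PNat.coe_inj, Nat.succPNat_coe]
  have := a.pos
  omega

lemma sumCollapse {R : Type*} [AddCommMonoid R] (k : ℕ) (a : ℕ+) (G : ℕ → R) :
    ∑ j ∈ Finset.range (k+1), (if (k - j).succPNat = a then G j else 0)
      = if (a:ℕ) ≤ k+1 then G (k+1-(a:ℕ)) else 0 := by
  have hpos := a.pos
  by_cases ha : (a:ℕ) ≤ k+1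
  · rw [if_pos ha]
    rw [Finset.sum_eq_single (k+1-(a:ℕ))]
    · rw [if_pos]
      rw [succPNat_eq_iff (by omega) a]
      exact ⟨ha, rfl⟩
    · intro j hj hne
      rw [if_neg]
      rw [succPNat_eq_iff (Finset.mem_range.mp hj) a]
      rintro ⟨_, rfl⟩; exact hne rfl
    · intro h; exfalso; apply h; rw [Finset.mem_range]; omega
  · rw [if_neg ha]
    apply Finset.sum_eq_zero
    intro j hj
    rw [if_neg]
    rw [succPNat_eq_iff (Finset.mem_range.mp hj) a]
    rintro ⟨h, _⟩; exact ha h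

noncomputable def phiA (a : ℕ+) : A →ₐ[ℂ] Polynomial ℂ :=
  aeval (fun c => if c = a then Polynomial.X else 0)

lemma phiA_S_zero (a : ℕ+) : phiA a (S 0) = 1 := by rw [S_zero, map_one]

lemma phiA_S_succ (a : ℕ+) (k : ℕ) :
    phiA a (S (k+1)) = ((k : ℂ) + 1)⁻¹ •
      (if (a:ℕ) ≤ k+1 then (Polynomial.C (2⁻¹:ℂ) * Polynomial.X) * phiA a (S (k+1-(a:ℕ))) else 0) := by
  rw [S_succ, map_smul, map_sum]
  congr 1
  rw [← sumCollapse k a (fun j => (Polynomial.C (2⁻¹:ℂ) * Polynomial.X) * phiA a (S j))]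
  apply Finset.sum_congr rfl
  intro j _
  rw [map_mul, map_mul, phiA, aeval_X, aeval_C]
  by_cases h : (k - j).succPNat = a
  · rw [if_pos h, if_pos h, Polynomial.algebraMap_eq]
  · rw [if_neg h, if_neg h, mul_zero, zero_mul]

lemma phiA_S_coeff0 (a : ℕ+) (k : ℕ) :
    (phiA a (S k)).coeff 0 = if k = 0 then 1 else 0 := by
  cases k with
  | zero => simp [phiA_S_zero]
  | succ k =>
    rw [phiA_S_succ, Polynomial.coeff_smul]
    have hz : (if (a:ℕ) ≤ k+1 then (Polynomial.C (2⁻¹:ℂ) * Polynomial.X) * phiA a (S (k+1-(a:ℕ))) else 0).coeff 0 = 0 := by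
      by_cases h : (a:ℕ) ≤ k+1
      · rw [if_pos h, mul_assoc, Polynomial.coeff_C_mul, Polynomial.mul_coeff_zero]
        simp
      · rw [if_neg h, Polynomial.coeff_zero]
    rw [hz]
    simp

lemma phiA_S_coeff1 (a : ℕ+) (k : ℕ) :
    (phiA a (S k)).coeff 1 = if k = (a:ℕ) then (2*(a:ℂ))⁻¹ else 0 := by
  have hpos := a.pos
  have hane : ((a:ℕ):ℂ) ≠ 0 := Nat.cast_ne_zero.mpr (by omega)
  cases k with
  | zero =>
    rw [phiA_S_zero, if_neg (by omega)]
    simp [Polynomial.coeff_one]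
  | succ k =>
    rw [phiA_S_succ, Polynomial.coeff_smul]
    by_cases h : (a:ℕ) ≤ k+1
    · rw [if_pos h, mul_assoc, Polynomial.coeff_C_mul, Polynomial.coeff_X_mul,
        phiA_S_coeff0]
      by_cases he : k+1 = (a:ℕ)
      · rw [if_pos (by omega), if_pos he]
        have hc : ((k:ℂ)+1) = ((a:ℕ):ℂ) := by
          rw [← he]; push_cast; ring
        rw [hc]
        field_simp
        ring_nf; simp [hane]
      · rw [if_neg (by omega), if_neg he]
        simp
    · rw [if_neg h, if_neg (by omega)]
      simp

lemma phiA_S_coeff2 (a : ℕ+) (k : ℕ) :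
    (phiA a (S k)).coeff 2 = if k = 2*(a:ℕ) then (8*(a:ℂ)*(a:ℂ))⁻¹ else 0 := by
  have hpos := a.pos
  have hane : ((a:ℕ):ℂ) ≠ 0 := Nat.cast_ne_zero.mpr (by omega)
  cases k with
  | zero =>
    rw [phiA_S_zero, if_neg (by omega)]
    simp [Polynomial.coeff_one]
  | succ k =>
    rw [phiA_S_succ, Polynomial.coeff_smul]
    by_cases h : (a:ℕ) ≤ k+1
    · rw [if_pos h, mul_assoc, Polynomial.coeff_C_mul]
      have h21 : (2:ℕ) = 1+1 := rfl
      rw [h21, Polynomial.coeff_X_mul, phiA_S_coeff1]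
      by_cases he : k+1 = 2*(a:ℕ)
      · rw [if_pos (by omega), if_pos he]
        have hc : ((k:ℂ)+1) = 2*((a:ℕ):ℂ) := by
          have h2 : (((k+1):ℕ):ℂ) = (((2*(a:ℕ)):ℕ):ℂ) := by exact_mod_cast congrArg (Nat.cast : ℕ → ℂ) he
          push_cast at h2
          linear_combination h2
        rw [hc]
        field_simp
        ring_nf; rw [← mul_pow, mul_inv_cancel₀ hane, one_pow]
      · rw [if_neg (by omega), if_neg he]
        simp
    · rw [if_neg h, if_neg (by omega)]
      simp

noncomputable def psiA (a b : ℕ+) : A →ₐ[ℂ] Polynomial (Polynomial ℂ) :=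
  aeval (fun c => if c = a then Polynomial.C Polynomial.X
    else if c = b then Polynomial.X else 0)

lemma psiA_S_zero (a b : ℕ+) : psiA a b (S 0) = 1 := by rw [S_zero, map_one]

lemma psiA_S_succ (a b : ℕ+) (hab : a ≠ b) (k : ℕ) :
    psiA a b (S (k+1)) = ((k : ℂ) + 1)⁻¹ •
      ((if (a:ℕ) ≤ k+1 then (Polynomial.C (Polynomial.C (2⁻¹:ℂ)) * Polynomial.C Polynomial.X) * psiA a b (S (k+1-(a:ℕ))) else 0)
      + (if (b:ℕ) ≤ k+1 then (Polynomial.C (Polynomial.C (2⁻¹:ℂ)) * Polynomial.X) * psiA a b (S (k+1-(b:ℕ))) else 0)) := by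
  rw [S_succ, map_smul, map_sum]
  congr 1
  rw [← sumCollapse k a (fun j => (Polynomial.C (Polynomial.C (2⁻¹:ℂ)) * Polynomial.C Polynomial.X) * psiA a b (S j)),
      ← sumCollapse k b (fun j => (Polynomial.C (Polynomial.C (2⁻¹:ℂ)) * Polynomial.X) * psiA a b (S j)),
      ← Finset.sum_add_distrib]
  apply Finset.sum_congr rfl
  intro j _
  rw [map_mul, map_mul, psiA, aeval_X, aeval_C]
  by_cases ha : (k - j).succPNat = a
  · rw [if_pos ha, if_pos ha, if_neg (by rw [ha]; exact hab), add_zero]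
    rw [Polynomial.algebraMap_apply, Polynomial.algebraMap_eq]
  · by_cases hb : (k - j).succPNat = b
    · rw [if_neg ha, if_pos hb, if_pos hb, if_neg ha, zero_add]
      rw [Polynomial.algebraMap_apply, Polynomial.algebraMap_eq]
    · rw [if_neg ha, if_neg hb, if_neg ha, if_neg hb, add_zero, mul_zero, zero_mul]

lemma coeff_ite {R : Type*} [Semiring R] (c : Prop) [Decidable c] (p : Polynomial R) (n : ℕ) :
    (if c then p else 0).coeff n = if c then p.coeff n else 0 := by
  split_ifs <;> simp

lemma cA (p : Polynomial (Polynomial ℂ)) (n : ℕ) :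
    (Polynomial.C (Polynomial.C (2⁻¹:ℂ)) * Polynomial.C Polynomial.X * p).coeff n
      = Polynomial.C (2⁻¹:ℂ) * Polynomial.X * p.coeff n := by
  rw [← Polynomial.C_mul, Polynomial.coeff_C_mul]

lemma cB0 (p : Polynomial (Polynomial ℂ)) :
    (Polynomial.C (Polynomial.C (2⁻¹:ℂ)) * Polynomial.X * p).coeff 0 = 0 := by
  rw [mul_assoc, Polynomial.coeff_C_mul, Polynomial.mul_coeff_zero]
  simp

lemma cB1 (p : Polynomial (Polynomial ℂ)) :
    (Polynomial.C (Polynomial.C (2⁻¹:ℂ)) * Polynomial.X * p).coeff 1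
      = Polynomial.C (2⁻¹:ℂ) * p.coeff 0 := by
  rw [mul_assoc, Polynomial.coeff_C_mul, Polynomial.coeff_X_mul]

lemma cI0 (q : Polynomial ℂ) : (Polynomial.C (2⁻¹:ℂ) * Polynomial.X * q).coeff 0 = 0 := by
  rw [mul_assoc, Polynomial.coeff_C_mul, Polynomial.mul_coeff_zero]
  simp

lemma cI1 (q : Polynomial ℂ) : (Polynomial.C (2⁻¹:ℂ) * Polynomial.X * q).coeff 1
    = 2⁻¹ * q.coeff 0 := by
  rw [mul_assoc, Polynomial.coeff_C_mul, Polynomial.coeff_X_mul]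

lemma psiA_S_coeff00 (a b : ℕ+) (hab : a ≠ b) (k : ℕ) :
    ((psiA a b (S k)).coeff 0).coeff 0 = if k = 0 then 1 else 0 := by
  cases k with
  | zero => simp [psiA_S_zero, Polynomial.coeff_one]
  | succ k =>
    rw [psiA_S_succ a b hab, Polynomial.coeff_smul, Polynomial.coeff_add,
      coeff_ite, coeff_ite, cA, cB0, Polynomial.coeff_smul, Polynomial.coeff_add,
      coeff_ite, coeff_ite, cI0, Polynomial.coeff_zero]
    simp

lemma psiA_S_coeff10 (a b : ℕ+) (hab : a ≠ b) (k : ℕ) :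
    ((psiA a b (S k)).coeff 0).coeff 1 = if k = (a:ℕ) then (2*(a:ℂ))⁻¹ else 0 := by
  have hpos := a.pos
  have hane : ((a:ℕ):ℂ) ≠ 0 := Nat.cast_ne_zero.mpr (by omega)
  cases k with
  | zero =>
    rw [psiA_S_zero, if_neg (by omega)]
    simp [Polynomial.coeff_one]
  | succ k =>
    rw [psiA_S_succ a b hab, Polynomial.coeff_smul, Polynomial.coeff_add,
      coeff_ite, coeff_ite, cA, cB0, Polynomial.coeff_smul, Polynomial.coeff_add,
      coeff_ite, coeff_ite, cI1, Polynomial.coeff_zero, psiA_S_coeff00 a b hab]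
    have hb0 : (if (b:ℕ) ≤ k+1 then (0:ℂ) else 0) = 0 := by split_ifs <;> rfl
    rw [hb0, add_zero]
    by_cases he : k+1 = (a:ℕ)
    · rw [if_pos (by omega : (a:ℕ) ≤ k+1), if_pos (by omega : k+1-(a:ℕ) = 0), if_pos he]
      have hc : ((k:ℂ)+1) = ((a:ℕ):ℂ) := by rw [← he]; push_cast; ring
      rw [hc, smul_eq_mul, mul_one, mul_inv]
      ring
    · rw [if_neg he]
      by_cases h : (a:ℕ) ≤ k+1
      · rw [if_pos h, if_neg (by omega)]
        simp
      · rw [if_neg h]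
        simp

lemma psiA_S_coeff01 (a b : ℕ+) (hab : a ≠ b) (k : ℕ) :
    ((psiA a b (S k)).coeff 1).coeff 0 = if k = (b:ℕ) then (2*(b:ℂ))⁻¹ else 0 := by
  have hpos := b.pos
  have hbne : ((b:ℕ):ℂ) ≠ 0 := Nat.cast_ne_zero.mpr (by omega)
  cases k with
  | zero =>
    rw [psiA_S_zero, if_neg (by omega)]
    simp [Polynomial.coeff_one]
  | succ k =>
    rw [psiA_S_succ a b hab, Polynomial.coeff_smul, Polynomial.coeff_add,
      coeff_ite, coeff_ite, cA, cB1, Polynomial.coeff_smul, Polynomial.coeff_add,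
      coeff_ite, coeff_ite, cI0, Polynomial.coeff_C_mul, psiA_S_coeff00 a b hab]
    have ha0 : (if (a:ℕ) ≤ k+1 then (0:ℂ) else 0) = 0 := by split_ifs <;> rfl
    rw [ha0, zero_add]
    by_cases he : k+1 = (b:ℕ)
    · rw [if_pos (by omega : (b:ℕ) ≤ k+1), if_pos (by omega : k+1-(b:ℕ) = 0), if_pos he]
      have hc : ((k:ℂ)+1) = ((b:ℕ):ℂ) := by rw [← he]; push_cast; ring
      rw [hc, smul_eq_mul, mul_one, mul_inv]
      ring
    · rw [if_neg he]
      by_cases h : (b:ℕ) ≤ k+1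
      · rw [if_pos h, if_neg (by omega)]
        simp
      · rw [if_neg h]
        simp

lemma psiA_S_coeff11 (a b : ℕ+) (hab : a ≠ b) (k : ℕ) :
    ((psiA a b (S k)).coeff 1).coeff 1
      = if k = (a:ℕ)+(b:ℕ) then (4*(a:ℂ)*(b:ℂ))⁻¹ else 0 := by
  have hapos := a.pos
  have hbpos := b.pos
  have hane : ((a:ℕ):ℂ) ≠ 0 := Nat.cast_ne_zero.mpr (by omega)
  have hbne : ((b:ℕ):ℂ) ≠ 0 := Nat.cast_ne_zero.mpr (by omega)
  cases k with
  | zero =>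
    rw [psiA_S_zero, if_neg (by omega)]
    simp [Polynomial.coeff_one]
  | succ k =>
    rw [psiA_S_succ a b hab, Polynomial.coeff_smul, Polynomial.coeff_add,
      coeff_ite, coeff_ite, cA, cB1, Polynomial.coeff_smul, Polynomial.coeff_add,
      coeff_ite, coeff_ite, cI1, Polynomial.coeff_C_mul,
      psiA_S_coeff01 a b hab, psiA_S_coeff10 a b hab]
    by_cases he : k+1 = (a:ℕ)+(b:ℕ)
    · rw [if_pos (by omega : (a:ℕ) ≤ k+1), if_pos (by omega : (b:ℕ) ≤ k+1),
        if_pos (by omega : k+1-(a:ℕ) = (b:ℕ)), if_pos (by omega : k+1-(b:ℕ) = (a:ℕ)),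
        if_pos he]
      have hc : ((k:ℂ)+1) = ((a:ℕ):ℂ) + ((b:ℕ):ℂ) := by
        have h2 : (((k+1):ℕ):ℂ) = ((((a:ℕ)+(b:ℕ)):ℕ):ℂ) := by exact_mod_cast congrArg (Nat.cast : ℕ → ℂ) he
        push_cast at h2
        linear_combination h2
      rw [hc, smul_eq_mul]
      have hs : ((a:ℕ):ℂ) + ((b:ℕ):ℂ) ≠ 0 := by
        intro h0
        have : (((a:ℕ)+(b:ℕ) : ℕ):ℂ) = 0 := by push_cast; linear_combination h0
        rw [Nat.cast_eq_zero] at this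
        omega
      have hkey : (2⁻¹*(2*(b:ℂ))⁻¹ + 2⁻¹*(2*(a:ℂ))⁻¹)
          = (((a:ℕ):ℂ)+((b:ℕ):ℂ)) * (4*(a:ℂ)*(b:ℂ))⁻¹ := by
        field_simp
        ring
      rw [hkey, ← mul_assoc, inv_mul_cancel₀ hs, one_mul]
    · rw [if_neg he]
      have e1 : (if (a:ℕ) ≤ k+1 then 2⁻¹ * (if k+1-(a:ℕ) = (b:ℕ) then (2*(b:ℂ))⁻¹ else 0) else 0) = 0 := by
        by_cases h : (a:ℕ) ≤ k+1
        · rw [if_pos h, if_neg (by omega)]; simp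
        · rw [if_neg h]
      have e2 : (if (b:ℕ) ≤ k+1 then 2⁻¹ * (if k+1-(b:ℕ) = (a:ℕ) then (2*(a:ℂ))⁻¹ else 0) else 0) = 0 := by
        by_cases h : (b:ℕ) ≤ k+1
        · rw [if_pos h, if_neg (by omega)]; simp
        · rw [if_neg h]
      rw [e1, e2]
      simp

lemma mul1 {R : Type*} [CommRing R] (p q : Polynomial R) :
    (p*q).coeff 1 = p.coeff 0 * q.coeff 1 + p.coeff 1 * q.coeff 0 := by
  rw [Polynomial.coeff_mul, show (Finset.HasAntidiagonal.antidiagonal (1:ℕ)) = {(0,1),(1,0)} from rfl,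
    Finset.sum_insert (by decide), Finset.sum_singleton]

lemma mul2 {R : Type*} [CommRing R] (p q : Polynomial R) :
    (p*q).coeff 2 = p.coeff 0 * q.coeff 2 + p.coeff 1 * q.coeff 1 + p.coeff 2 * q.coeff 0 := by
  rw [Polynomial.coeff_mul, show (Finset.HasAntidiagonal.antidiagonal (2:ℕ)) = {(0,2),(1,1),(2,0)} from rfl,
    Finset.sum_insert (by decide), Finset.sum_insert (by decide), Finset.sum_singleton, add_assoc]

lemma c_zero : (-1:ℂ)^0 * halfChoose 0 = 1 := by
  simp [halfChoose]

lemma hc0 : halfChoose 0 = 1 := by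
  simp [halfChoose]

/-- Constant coefficient functional on `P n m`. -/
lemma C00_P (n m : ℕ) :
    (phiA 1 (P n m)).coeff 0 = if n = 0 ∧ m = 0 then 1 else 0 := by
  rw [P, map_sum, Polynomial.finset_sum_coeff]
  have step : ∀ k ∈ Finset.range (n+1),
      ((phiA 1) (((-1:ℂ)^k * halfChoose k) • (S (m+k) * S (n-k)))).coeff 0
        = if k = 0 then (if n = 0 ∧ m = 0 then 1 else 0) else 0 := by
    intro k hk
    rw [Finset.mem_range] at hk
    rw [map_smul, Polynomial.coeff_smul, map_mul, Polynomial.mul_coeff_zero,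
      phiA_S_coeff0, phiA_S_coeff0, smul_eq_mul]
    rcases Nat.eq_zero_or_pos k with rfl | hkpos
    · rw [if_pos rfl]
      split_ifs <;> first | (exfalso; omega) | ring1 | (rw [c_zero]; ring1)
    · rw [if_neg (by omega)]
      split_ifs <;> first | (exfalso; omega) | ring1
  rw [Finset.sum_congr rfl step, Finset.sum_ite_eq' (Finset.range (n+1)) 0,
    if_pos (Finset.mem_range.mpr (by omega))]

/-- Coefficient of `x_w` in `P n m`. -/
lemma U_P (w : ℕ+) (n m : ℕ) (h : n ≤ m) :
    (phiA w (P n m)).coeff 1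
      = if m+n = (w:ℕ) then ((-1:ℂ)^n * halfChoose n) * (2*(w:ℂ))⁻¹ else 0 := by
  have hw := w.pos
  rw [P, map_sum, Polynomial.finset_sum_coeff]
  have step : ∀ k ∈ Finset.range (n+1),
      ((phiA w) (((-1:ℂ)^k * halfChoose k) • (S (m+k) * S (n-k)))).coeff 1
        = if k = n then (if m+n = (w:ℕ) then ((-1:ℂ)^n * halfChoose n) * (2*(w:ℂ))⁻¹ else 0) else 0 := by
    intro k hk
    rw [Finset.mem_range] at hk
    rw [map_smul, Polynomial.coeff_smul, map_mul, mul1,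
      phiA_S_coeff0, phiA_S_coeff0, phiA_S_coeff1, phiA_S_coeff1, smul_eq_mul]
    rcases Nat.lt_succ_iff_lt_or_eq.mp hk with hlt | rfl
    · rw [if_neg (by omega)]
      split_ifs <;> first | (exfalso; omega) | ring1
    · rw [if_pos rfl]
      split_ifs <;> first | (exfalso; omega) | ring1
  rw [Finset.sum_congr rfl step, Finset.sum_ite_eq' (Finset.range (n+1)) n,
    if_pos (Finset.mem_range.mpr (by omega))]

set_option maxHeartbeats 1600000 in
/-- Coefficient of `x_a^2` in `P n m`. -/
lemma W_P (a : ℕ+) (n m : ℕ) (h : n ≤ m) :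
    (phiA a (P n m)).coeff 2
      = (if m+n = 2*(a:ℕ) then ((-1:ℂ)^n * halfChoose n) * (8*(a:ℂ)*(a:ℂ))⁻¹ else 0)
        + (if n = (a:ℕ) ∧ m = (a:ℕ) then (2*(a:ℂ))⁻¹*(2*(a:ℂ))⁻¹ else 0) := by
  have ha := a.pos
  rw [P, map_sum, Polynomial.finset_sum_coeff]
  have step : ∀ k ∈ Finset.range (n+1),
      ((phiA a) (((-1:ℂ)^k * halfChoose k) • (S (m+k) * S (n-k)))).coeff 2
        = (if k = n then (if m+n = 2*(a:ℕ) then ((-1:ℂ)^n * halfChoose n) * (8*(a:ℂ)*(a:ℂ))⁻¹ else 0) else 0)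
          + (if k = 0 then (if n = (a:ℕ) ∧ m = (a:ℕ) then (2*(a:ℂ))⁻¹*(2*(a:ℂ))⁻¹ else 0) else 0) := by
    intro k hk
    rw [Finset.mem_range] at hk
    rw [map_smul, Polynomial.coeff_smul, map_mul, mul2,
      phiA_S_coeff0, phiA_S_coeff0, phiA_S_coeff1, phiA_S_coeff1,
      phiA_S_coeff2, phiA_S_coeff2, smul_eq_mul]
    by_cases hkn : k = n
    · subst hkn
      split_ifs <;> first | (exfalso; omega) | ring1 | (rw [hc0]; ring1)
    · by_cases hk0 : k = 0
      · subst hk0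
        split_ifs <;> first | (exfalso; omega) | ring1 | (rw [hc0]; ring1)
      · split_ifs <;> first | (exfalso; omega) | ring1
  rw [Finset.sum_congr rfl step, Finset.sum_add_distrib,
    Finset.sum_ite_eq' (Finset.range (n+1)) n, Finset.sum_ite_eq' (Finset.range (n+1)) 0,
    if_pos (Finset.mem_range.mpr (by omega)), if_pos (Finset.mem_range.mpr (by omega))]

set_option maxHeartbeats 1600000 in
/-- Coefficient of `x_a x_b` in `P n m`, for `a < b`. -/
lemma V_P (a b : ℕ+) (hab : (a:ℕ) < (b:ℕ)) (n m : ℕ) (h : n ≤ m) :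
    ((psiA a b (P n m)).coeff 1).coeff 1
      = (if m+n = (a:ℕ)+(b:ℕ) then ((-1:ℂ)^n * halfChoose n) * (4*(a:ℂ)*(b:ℂ))⁻¹ else 0)
        + (if (a:ℕ) ≤ n ∧ m+n = (a:ℕ)+(b:ℕ) then
            ((-1:ℂ)^(n-(a:ℕ)) * halfChoose (n-(a:ℕ))) * ((2*(b:ℂ))⁻¹*(2*(a:ℂ))⁻¹) else 0) := by
  have ha := a.pos
  have hb := b.pos
  have hab' : a ≠ b := by
    intro hh
    rw [hh] at hab
    omega
  rw [P, map_sum, Polynomial.finset_sum_coeff, Polynomial.finset_sum_coeff]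
  have step : ∀ k ∈ Finset.range (n+1),
      (((psiA a b) (((-1:ℂ)^k * halfChoose k) • (S (m+k) * S (n-k)))).coeff 1).coeff 1
        = (if k = n then (if m+n = (a:ℕ)+(b:ℕ) then ((-1:ℂ)^n * halfChoose n) * (4*(a:ℂ)*(b:ℂ))⁻¹ else 0) else 0)
          + (if k = n-(a:ℕ) then (if (a:ℕ) ≤ n ∧ m+n = (a:ℕ)+(b:ℕ) then
              ((-1:ℂ)^(n-(a:ℕ)) * halfChoose (n-(a:ℕ))) * ((2*(b:ℂ))⁻¹*(2*(a:ℂ))⁻¹) else 0) else 0) := by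
    intro k hk
    rw [Finset.mem_range] at hk
    rw [map_smul, Polynomial.coeff_smul, Polynomial.coeff_smul, map_mul, mul1,
      Polynomial.coeff_add, mul1, mul1, smul_eq_mul]
    rw [psiA_S_coeff00 a b hab', psiA_S_coeff00 a b hab',
      psiA_S_coeff10 a b hab', psiA_S_coeff10 a b hab',
      psiA_S_coeff01 a b hab', psiA_S_coeff01 a b hab',
      psiA_S_coeff11 a b hab', psiA_S_coeff11 a b hab']
    by_cases hkn : k = n
    · subst hkn
      split_ifs <;> first | (exfalso; omega) | ring1 | (rw [hc0]; ring1)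
    · by_cases hka : k = n-(a:ℕ)
      · subst hka
        split_ifs <;> first | (exfalso; omega) | ring1
      · split_ifs <;> first | (exfalso; omega) | ring1
  rw [Finset.sum_congr rfl step, Finset.sum_add_distrib,
    Finset.sum_ite_eq' (Finset.range (n+1)) n, Finset.sum_ite_eq' (Finset.range (n+1)) (n-(a:ℕ)),
    if_pos (Finset.mem_range.mpr (by omega)), if_pos (Finset.mem_range.mpr (by omega))]

noncomputable def Lphi (a : ℕ+) (i : ℕ) : A →ₗ[ℂ] ℂ :=
  (Polynomial.lcoeff ℂ i).comp (phiA a).toLinearMap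

lemma Lphi_apply (a : ℕ+) (i : ℕ) (p : A) : Lphi a i p = (phiA a p).coeff i := rfl

noncomputable def Lpsi (a b : ℕ+) : A →ₗ[ℂ] ℂ where
  toFun p := ((psiA a b p).coeff 1).coeff 1
  map_add' p q := by simp [map_add]
  map_smul' c p := by simp [map_smul, Polynomial.coeff_smul, smul_eq_mul]

lemma Lpsi_apply (a b : ℕ+) (p : A) : Lpsi a b p = ((psiA a b p).coeff 1).coeff 1 := rfl

lemma apply_rel {ι : Type*} (s : Finset ι) (g : ι → ℂ) (v : ι → A)
    (hrel : ∑ q ∈ s, g q • v q = 0) (T : A →ₗ[ℂ] ℂ) :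
    ∑ q ∈ s, g q * T (v q) = 0 := by
  have h := congrArg T hrel
  rw [map_sum, map_zero] at h
  rw [← h]
  apply Finset.sum_congr rfl
  intro q _
  rw [map_smul, smul_eq_mul]

lemma collapse {ι : Type*} (s : Finset ι) (g E : ι → ℂ) (q : ι) (hq : q ∈ s)
    (hsum : ∑ q' ∈ s, g q' * E q' = 0)
    (hothers : ∀ q' ∈ s, q' ≠ q → g q' * E q' = 0)
    (hself : E q ≠ 0) : g q = 0 := by
  classical
  have h := Finset.sum_eq_single (f := fun q' => g q' * E q') q hothers (fun h => absurd hq h)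
  rw [h] at hsum
  rcases mul_eq_zero.mp hsum with h1 | h1
  · exact h1
  · exact absurd h1 hself

lemma Tdiag_val (a : ℕ+) (n' m' : ℕ) (h : n' ≤ m') :
    (8*(a:ℂ)*(a:ℂ)) * (phiA a (P n' m')).coeff 2
      - (4*(a:ℂ)) * (phiA (2*a) (P n' m')).coeff 1
    = if n' = (a:ℕ) ∧ m' = (a:ℕ) then 2 else 0 := by
  have ha := a.pos
  have hane : ((a:ℕ):ℂ) ≠ 0 := Nat.cast_ne_zero.mpr (by omega)
  rw [W_P a n' m' h, U_P (2*a) n' m' h]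
  simp only [PNat.mul_coe, PNat.val_ofNat, Nat.cast_mul, Nat.cast_ofNat]
  split_ifs <;> first | (exfalso; omega) | (field_simp; all_goals ring1) | (field_simp; all_goals (ring_nf; rw [← mul_pow, mul_inv_cancel₀ hane]; norm_num))

lemma Tcross_val (a b : ℕ+) (hab : (a:ℕ) < (b:ℕ)) (n' m' : ℕ) (h : n' ≤ m') :
    (4*(a:ℂ)*(b:ℂ)) * ((psiA a b (P n' m')).coeff 1).coeff 1
      - (2*((a:ℂ)+(b:ℂ))) * (phiA (a+b) (P n' m')).coeff 1
    = if (a:ℕ) ≤ n' ∧ m'+n' = (a:ℕ)+(b:ℕ) then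
        (-1:ℂ)^(n'-(a:ℕ)) * halfChoose (n'-(a:ℕ)) else 0 := by
  have ha := a.pos
  have hb := b.pos
  have hane : ((a:ℕ):ℂ) ≠ 0 := Nat.cast_ne_zero.mpr (by omega)
  have hbne : ((b:ℕ):ℂ) ≠ 0 := Nat.cast_ne_zero.mpr (by omega)
  have hsne : ((a:ℕ):ℂ) + ((b:ℕ):ℂ) ≠ 0 := by
    intro h0
    have : (((a:ℕ)+(b:ℕ) : ℕ):ℂ) = 0 := by push_cast; linear_combination h0
    rw [Nat.cast_eq_zero] at this
    omega
  rw [V_P a b hab n' m' h, U_P (a+b) n' m' h]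
  simp only [PNat.add_coe, Nat.cast_add]
  split_ifs <;> first | (exfalso; omega) | (field_simp; all_goals ring1) | (field_simp; all_goals ring_nf)



/-- The family `{P_{n,m} : m ≥ n ≥ 0}` is linearly independent over `ℂ`. -/
theorem P_linearIndependent :
    LinearIndependent ℂ (fun q : {q : ℕ × ℕ // q.1 ≤ q.2} => P q.1.1 q.1.2) := by
  rw [linearIndependent_iff']
  intro s g hrel i his
  suffices H : ∀ d : ℕ, ∀ q : {q : ℕ × ℕ // q.1 ≤ q.2}, q ∈ s → q.1.2 - q.1.1 = d → g q = 0 by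
    exact H _ i his rfl
  intro d
  induction d using Nat.strong_induction_on with
  | _ d IH =>
  rintro ⟨⟨n, m⟩, hnm⟩ hq hd
  simp only at hnm hd
  rcases Nat.lt_or_ge n m with hlt | hge
  · rcases Nat.eq_zero_or_pos n with rfl | hn
    · -- pair (0, m), m ≥ 1 : use coefficient of x_m
      set w : ℕ+ := ⟨m, by omega⟩ with hwdef
      have hw : (w:ℕ) = m := rfl
      have hsum := apply_rel s g _ hrel (Lphi w 1)
      rw [Finset.sum_congr rfl (fun q' _ => by
        rw [Lphi_apply, U_P w _ _ q'.2])] at hsum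
      refine collapse s g _ ⟨(0,m), hnm⟩ hq hsum ?_ ?_
      · rintro ⟨⟨n', m'⟩, h'⟩ hq' hne
        simp only at h' ⊢
        by_cases hc : m' + n' = (w:ℕ)
        · rcases Nat.eq_zero_or_pos n' with rfl | hn'
          · exfalso
            apply hne
            apply Subtype.ext
            simp only [hw] at hc
            simp [Prod.ext_iff]
            omega
          · have hz := IH (m' - n') (by omega) ⟨⟨n', m'⟩, h'⟩ hq' rfl
            rw [hz, zero_mul]
        · rw [if_neg hc, mul_zero]
      · show (if m + 0 = (w:ℕ) then ((-1:ℂ))^0 * halfChoose 0 * (2*((w:ℕ):ℂ))⁻¹ else 0) ≠ 0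
        rw [if_pos (by omega), pow_zero, hc0, one_mul, one_mul]
        apply inv_ne_zero
        exact mul_ne_zero two_ne_zero (Nat.cast_ne_zero.mpr (by have := w.pos; omega))
    · -- pair (n, m), 1 ≤ n < m : cross functional
      set a : ℕ+ := ⟨n, hn⟩ with hadef
      set b : ℕ+ := ⟨m, by omega⟩ with hbdef
      have hacoe : (a:ℕ) = n := rfl
      have hbcoe : (b:ℕ) = m := rfl
      have hab : (a:ℕ) < (b:ℕ) := by omega
      have hsum := apply_rel s g _ hrel
        ((4*(a:ℂ)*(b:ℂ)) • Lpsi a b - (2*((a:ℂ)+(b:ℂ))) • Lphi (a+b) 1)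
      rw [Finset.sum_congr rfl (fun q' _ => by
        rw [LinearMap.sub_apply, LinearMap.smul_apply, LinearMap.smul_apply,
          smul_eq_mul, smul_eq_mul, Lpsi_apply, Lphi_apply,
          show (4*(a:ℂ)*(b:ℂ)) * ((psiA a b (P q'.1.1 q'.1.2)).coeff 1).coeff 1
              - (2*((a:ℂ)+(b:ℂ))) * (phiA (a+b) (P q'.1.1 q'.1.2)).coeff 1
            = _ from Tcross_val a b hab q'.1.1 q'.1.2 q'.2])] at hsum
      refine collapse s g _ ⟨(n,m), hnm⟩ hq hsum ?_ ?_
      · rintro ⟨⟨n', m'⟩, h'⟩ hq' hne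
        simp only at h' ⊢
        by_cases hc : (a:ℕ) ≤ n' ∧ m' + n' = (a:ℕ) + (b:ℕ)
        · rcases Nat.lt_or_ge n n' with hlt' | hge'
          · have hz := IH (m' - n') (by omega) ⟨⟨n', m'⟩, h'⟩ hq' rfl
            rw [hz, zero_mul]
          · exfalso
            apply hne
            apply Subtype.ext
            simp [Prod.ext_iff]
            omega
        · rw [if_neg hc, mul_zero]
      · simp only [hacoe, hbcoe]
        rw [if_pos ⟨le_refl n, by omega⟩, Nat.sub_self, pow_zero, hc0, one_mul]
        exact one_ne_zero
  · -- n = m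
    have hm : m = n := le_antisymm hge hnm
    subst hm
    rcases Nat.eq_zero_or_pos m with rfl | hn
    · -- pair (0,0)
      have hsum := apply_rel s g _ hrel (Lphi 1 0)
      rw [Finset.sum_congr rfl (fun q' _ => by
        rw [Lphi_apply, C00_P])] at hsum
      refine collapse s g _ ⟨(0,0), hnm⟩ hq hsum ?_ ?_
      · rintro ⟨⟨n', m'⟩, h'⟩ hq' hne
        simp only at h' ⊢
        by_cases hc : n' = 0 ∧ m' = 0
        · exfalso
          apply hne
          apply Subtype.ext
          simp [Prod.ext_iff]
          omega
        · rw [if_neg hc, mul_zero]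
      · simp
    · -- pair (a,a), a ≥ 1
      set a : ℕ+ := ⟨m, hn⟩ with hadef
      have hacoe : (a:ℕ) = m := rfl
      have hsum := apply_rel s g _ hrel
        ((8*(a:ℂ)*(a:ℂ)) • Lphi a 2 - (4*(a:ℂ)) • Lphi (2*a) 1)
      rw [Finset.sum_congr rfl (fun q' _ => by
        rw [LinearMap.sub_apply, LinearMap.smul_apply, LinearMap.smul_apply,
          smul_eq_mul, smul_eq_mul, Lphi_apply, Lphi_apply,
          show (8*(a:ℂ)*(a:ℂ)) * (phiA a (P q'.1.1 q'.1.2)).coeff 2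
              - (4*(a:ℂ)) * (phiA (2*a) (P q'.1.1 q'.1.2)).coeff 1
            = _ from Tdiag_val a q'.1.1 q'.1.2 q'.2])] at hsum
      refine collapse s g _ ⟨(m,m), hnm⟩ hq hsum ?_ ?_
      · rintro ⟨⟨n', m'⟩, h'⟩ hq' hne
        simp only at h' ⊢
        by_cases hc : n' = (a:ℕ) ∧ m' = (a:ℕ)
        · exfalso
          apply hne
          apply Subtype.ext
          simp [Prod.ext_iff]
          omega
        · rw [if_neg hc, mul_zero]
      · show (if m = (a:ℕ) ∧ m = (a:ℕ) then (2:ℂ) else 0) ≠ 0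
        rw [if_pos ⟨hacoe.symm, hacoe.symm⟩]
        exact two_ne_zero
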